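/- Let α be a finite alphabet with a designated letter a. Then the family of monoidal languages over α is a proper subset of the family of star languages over α, which in turn is a proper subset of the family of union-free languages over α: every monoidal language is a star language, every star language is union-free, there is a star language that is not monoidal, and there is a union-free language that is not a star language. -/

import Mathlib

open Language Computability

universe u

variable {α : Type}

/-- The n-fold repetition (power) of a word. -/
def wordPow (y : List α) : ℕ → List α
  | 0 => []
  | n + 1 => y ++ wordPow y n

/-- A star language: the Kleene star of some regular language. -/
def IsStarLang (L : Language α) : Prop :=
  ∃ H : Language α, H.IsRegular ∧ L = H∗

/-- A left-sided comet. -/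
def IsLeftComet (L : Language α) : Prop :=
  ∃ E G : Language α, E.IsRegular ∧ G.IsRegular ∧ G ≠ 0 ∧ G ≠ 1 ∧ L = E * G∗

/-- A right-sided comet. -/
def IsRightComet (L : Language α) : Prop :=
  ∃ G H : Language α, G.IsRegular ∧ H.IsRegular ∧ G ≠ 0 ∧ G ≠ 1 ∧ L = G∗ * H

/-- A two-sided comet. -/
def IsTwoComet (L : Language α) : Prop :=
  ∃ E G H : Language α, E.IsRegular ∧ G.IsRegular ∧ H.IsRegular ∧
    G ≠ 0 ∧ G ≠ 1 ∧ L = E * G∗ * H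

/-- A regular expression is union-free if it is built from the atoms `0` (empty language)
and single letters using only concatenation and Kleene star. -/
def RegularExpression.UnionFree : RegularExpression α → Prop
  | RegularExpression.zero => True
  | RegularExpression.epsilon => False
  | RegularExpression.char _ => True
  | RegularExpression.plus _ _ => False
  | RegularExpression.comp r s => r.UnionFree ∧ s.UnionFree
  | RegularExpression.star r => r.UnionFree

/-- A union-free language: the language of a union-free regular expression. -/
def IsUnionFree (L : Language α) : Prop :=
  ∃ r : RegularExpression α, r.UnionFree ∧ r.matches' = L

/-- A monoidal language. -/
def IsMonoidal (L : Language α) : Prop := L = (⊤ : Language α)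

/-- The language of one-letter words with letters from `X`. -/
def lettersLang (X : Set α) : Language α := {w : List α | ∃ a ∈ X, w = [a]}

/-- A combinational language: `⊤ · X` for a set `X` of one-letter words. -/
def IsCombinational (L : Language α) : Prop :=
  ∃ X : Set α, L = (⊤ : Language α) * lettersLang X

/-- A symmetric definite language: `E · ⊤ · H` with `E, H` regular. -/
def IsSymDef (L : Language α) : Prop :=
  ∃ E H : Language α, E.IsRegular ∧ H.IsRegular ∧ L = E * (⊤ : Language α) * H

/-- A nilpotent language: finite or with finite complement. -/
def IsNilpotentLang (L : Language α) : Prop := L.Finite ∨ (Lᶜ : Language α).Finite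

/-- A definite language: `A ∪ ⊤ · B` with `A, B` finite. -/
def IsDefinite (L : Language α) : Prop :=
  ∃ A B : Language α, A.Finite ∧ B.Finite ∧ L = A + (⊤ : Language α) * B  -- `+` of languages is union

/-- An ordered language: accepted by a DFA with linearly ordered state set
whose transition maps are all monotone. -/
def IsOrdered (L : Language α) : Prop :=
  ∃ (σ : Type) (_ : Fintype σ) (_ : LinearOrder σ) (M : DFA α σ),
    (∀ a : α, Monotone fun q => M.step q a) ∧ M.accepts = L

/-- The non-counting property. -/
def HasNonCounting (L : Language α) : Prop :=
  ∃ k : ℕ, 1 ≤ k ∧ ∀ x y z : List α,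
    (x ++ wordPow y k ++ z ∈ L ↔ x ++ wordPow y (k + 1) ++ z ∈ L)

/-- A non-counting (star-free) regular language. -/
def IsNonCounting (L : Language α) : Prop := L.IsRegular ∧ HasNonCounting L

/-- The power-separating property. -/
def HasPowerSep (L : Language α) : Prop :=
  ∃ m : ℕ, 1 ≤ m ∧ ∀ x : List α,
    (∀ n, m ≤ n → wordPow x n ∉ L) ∨ (∀ n, m ≤ n → wordPow x n ∈ L)

/-- A power-separating regular language. -/
def IsPowerSep (L : Language α) : Prop := L.IsRegular ∧ HasPowerSep L

/-- A suffix-closed (regular) language. -/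
def IsSuffixClosed (L : Language α) : Prop :=
  L.IsRegular ∧ ∀ x y : List α, x ++ y ∈ L → y ∈ L

/-- A circular (regular) language. -/
def IsCircular (L : Language α) : Prop :=
  L.IsRegular ∧ ∀ u v : List α, u ++ v ∈ L → v ++ u ∈ L

/-- A commutative (regular) language. -/
def IsCommutative (L : Language α) : Prop :=
  L.IsRegular ∧ ∀ w ∈ L, ∀ v : List α, w.Perm v → v ∈ L

/-- The reversal of a language. -/
def Reversal (L : Language α) : Language α := {w : List α | ∃ v ∈ L, w = v.reverse}

/-- Two families of languages are incomparable if neither is contained in the other. -/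
def Incomparable (P Q : Language α → Prop) : Prop :=
  (∃ L : Language α, P L ∧ ¬ Q L) ∧ (∃ L : Language α, Q L ∧ ¬ P L)

/-- A finite language. -/
def IsFiniteLang (L : Language α) : Prop := L.Finite


namespace KlAux

variable {α σ : Type}

/-- Words taking `p` to `q` in DFA `M` with all intermediate states in `S`. -/
def Paths (M : DFA α σ) (p q : σ) (S : Set σ) : Language α :=
  {w | M.evalFrom p w = q ∧ ∀ u, u ≠ [] → u ≠ w → u <+: w → M.evalFrom p u ∈ S}

theorem Paths.mono {M : DFA α σ} {p q : σ} {S T : Set σ} (h : S ⊆ T) :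
    Paths M p q S ≤ Paths M p q T := fun _ hw =>
  ⟨hw.1, fun u h1 h2 h3 => h (hw.2 u h1 h2 h3)⟩

theorem Paths.append {M : DFA α σ} {p r q : σ} {T : Set σ} (hr : r ∈ T)
    {w1 w2 : List α} (h1 : w1 ∈ Paths M p r T) (h2 : w2 ∈ Paths M r q T) :
    w1 ++ w2 ∈ Paths M p q T := by
  refine ⟨by rw [DFA.evalFrom_of_append, h1.1, h2.1], fun u hne hnw hpre => ?_⟩
  rcases le_or_gt u.length w1.length with hl | hl
  · have hu1 : u <+: w1 := List.prefix_of_prefix_length_le hpre (List.prefix_append _ _) hl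
    by_cases he : u = w1
    · subst he; rw [h1.1]; exact hr
    · exact h1.2 u hne he hu1
  · have hw1u : w1 <+: u :=
      List.prefix_of_prefix_length_le (List.prefix_append _ _) hpre hl.le
    obtain ⟨v, rfl⟩ := hw1u
    have hv : v <+: w2 := (List.prefix_append_right_inj w1).1 hpre
    have hvne : v ≠ w2 := fun h => hnw (by rw [h])
    rcases eq_or_ne v [] with rfl | hvnil
    · rw [DFA.evalFrom_of_append, h1.1]; simpa using hr
    · rw [DFA.evalFrom_of_append, h1.1]
      exact h2.2 v hvnil hvne hv

/-- Split off the first visit to `s`. -/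
theorem split_first {M : DFA α σ} {p q s : σ} {S : Set σ} {w : List α}
    (hw : w ∈ Paths M p q (insert s S)) (hns : w ∉ Paths M p q S) :
    ∃ u v, w = u ++ v ∧ u ≠ [] ∧ v.length < w.length ∧
      u ∈ Paths M p s S ∧ v ∈ Paths M s q (insert s S) := by
  classical
  have hex : ∃ n, 0 < n ∧ n < w.length ∧ M.evalFrom p (w.take n) = s := by
    by_contra hno
    push_neg at hno
    apply hns
    refine ⟨hw.1, fun u h1 h2 h3 => ?_⟩
    have hu := hw.2 u h1 h2 h3
    rcases Set.mem_insert_iff.1 hu with he | he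
    · exfalso
      have hlen : 0 < u.length := List.length_pos_iff.2 h1
      have hlt : u.length < w.length := by
        rcases List.prefix_iff_eq_take.1 h3 with ht
        have := h3.length_le
        rcases lt_or_eq_of_le this with h | h
        · exact h
        · exact absurd (h3.eq_of_length h) h2
      have := hno u.length hlen hlt
      rw [← List.prefix_iff_eq_take.1 h3] at this
      exact this he
    · exact he
  let n := Nat.find hex
  obtain ⟨hn0, hnlt, hns'⟩ := Nat.find_spec hex
  refine ⟨w.take n, w.drop n, (List.take_append_drop n w).symm, ?_, ?_, ?_, ?_⟩
  · intro h
    have : (w.take n).length = 0 := by rw [h]; rfl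
    rw [List.length_take] at this
    omega
  · rw [List.length_drop]; omega
  · refine ⟨hns', fun u h1 h2 h3 => ?_⟩
    have hulen : u.length < n := by
      have := h3.length_le
      rw [List.length_take] at this
      rcases lt_or_eq_of_le this with h | h
      · omega
      · exfalso
        have : u = w.take n := h3.eq_of_length (by rw [List.length_take]; omega)
        exact h2 this
    have hupre : u <+: w := h3.trans (List.take_prefix _ _)
    have hueq : u = w.take u.length := List.prefix_iff_eq_take.1 hupre
    have huw : u ≠ w := by
      intro h; rw [h] at hulen; omega
    have hu := hw.2 u h1 huw hupre
    rcases Set.mem_insert_iff.1 hu with he | he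
    · exfalso
      have := Nat.find_min hex hulen
      push_neg at this
      have h0 : 0 < u.length := List.length_pos_iff.2 h1
      have := this h0 (by omega)
      rw [← hueq] at this
      exact this he
    · exact he
  · constructor
    · have := hw.1
      rw [← List.take_append_drop n w, DFA.evalFrom_of_append, hns'] at this
      exact this
    · intro v h1 h2 h3
      have hpre : w.take n ++ v <+: w := by
        conv_rhs => rw [← List.take_append_drop n w]
        exact (List.prefix_append_right_inj _).2 h3
      have hne : w.take n ++ v ≠ [] := by simp [h1]
      have hnw : w.take n ++ v ≠ w := by
        intro h
        apply h2
        have : w.take n ++ v = w.take n ++ w.drop n := by rw [h, List.take_append_drop]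
        exact (List.append_right_inj _).1 this
      have := hw.2 _ hne hnw hpre
      rwa [DFA.evalFrom_of_append, hns'] at this

theorem star_append {M : DFA α σ} {p s : σ} {T : Set σ} (hs : s ∈ T) :
    ∀ (Ls : List (List α)) (w1 : List α), w1 ∈ Paths M p s T →
      (∀ y ∈ Ls, y ∈ Paths M s s T) → w1 ++ Ls.flatten ∈ Paths M p s T := by
  intro Ls
  induction Ls with
  | nil => intro w1 h _; simpa using h
  | cons y Ls ih =>
    intro w1 h hLs
    have := ih (w1 ++ y) (Paths.append hs h (hLs y (by simp)))
      (fun y hy => hLs y (by simp [hy]))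
    simpa [List.append_assoc] using this

theorem loop_aux {M : DFA α σ} {q s : σ} {S : Set σ} :
    ∀ (n : ℕ) (w : List α), w.length < n → w ∈ Paths M s q (insert s S) →
      w ∈ (Paths M s s S)∗ * Paths M s q S := by
  intro n
  induction n with
  | zero => intro w h; omega
  | succ n ih =>
    intro w hlen hw
    by_cases h : w ∈ Paths M s q S
    · exact Language.mem_mul.2 ⟨[], Language.nil_mem_kstar _, w, h, by simp⟩
    · obtain ⟨u, v, rfl, hune, hlt, hu, hv⟩ := split_first hw h
      have := ih v (by omega) hv
      obtain ⟨g, hg, h', hh, rfl⟩ := Language.mem_mul.1 this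
      obtain ⟨Lg, rfl, hLg⟩ := Language.mem_kstar.1 hg
      refine Language.mem_mul.2 ⟨u ++ Lg.flatten, ?_, h', hh, by simp⟩
      have : (u :: Lg).flatten ∈ (Paths M s s S)∗ :=
        Language.join_mem_kstar
          (by intro y hy; rcases List.mem_cons.1 hy with rfl | hy; exacts [hu, hLg y hy])
      simpa using this

theorem loop {M : DFA α σ} {q s : σ} {S : Set σ} :
    ∀ w ∈ Paths M s q (insert s S), w ∈ (Paths M s s S)∗ * Paths M s q S :=
  fun w hw => loop_aux (w.length + 1) w (by omega) hw

theorem paths_insert {M : DFA α σ} {p q s : σ} {S : Set σ} :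
    Paths M p q (insert s S) =
      Paths M p q S + Paths M p s S * (Paths M s s S)∗ * Paths M s q S := by
  apply le_antisymm
  · intro w hw
    refine (Language.mem_add _ _ _).2 ?_
    by_cases h : w ∈ Paths M p q S
    · exact Or.inl h
    · obtain ⟨u, v, rfl, _, _, hu, hv⟩ := split_first hw h
      obtain ⟨g, hg, h', hh, rfl⟩ := Language.mem_mul.1 (loop v hv)
      refine Or.inr (Language.mem_mul.2 ⟨u ++ g, Language.mem_mul.2 ⟨u, hu, g, hg, rfl⟩,
        h', hh, by simp⟩)
  · intro w hw
    rcases (Language.mem_add _ _ _).1 hw with h | h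
    · exact Paths.mono (Set.subset_insert _ _) h
    · obtain ⟨x, hx, z, hz, rfl⟩ := Language.mem_mul.1 h
      obtain ⟨u, hu, g, hg, rfl⟩ := Language.mem_mul.1 hx
      obtain ⟨Ls, rfl, hLs⟩ := Language.mem_kstar.1 hg
      have hs : s ∈ insert s S := Set.mem_insert _ _
      have hu' : u ∈ Paths M p s (insert s S) := Paths.mono (Set.subset_insert _ _) hu
      have hjoin : u ++ Ls.flatten ∈ Paths M p s (insert s S) :=
        star_append hs Ls u hu'
          (fun y hy => Paths.mono (Set.subset_insert _ _) (hLs y hy))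
      have hz' : z ∈ Paths M s q (insert s S) := Paths.mono (Set.subset_insert _ _) hz
      exact Paths.append hs hjoin hz'

/-- Sum of a list of regular expressions. -/
def rsum : List (RegularExpression α) → RegularExpression α
  | [] => 0
  | r :: l => r + rsum l

theorem mem_rsum {l : List (RegularExpression α)} {x : List α} :
    x ∈ (rsum l).matches' ↔ ∃ r ∈ l, x ∈ r.matches' := by
  induction l with
  | nil => simp [rsum]
  | cons r l ih =>
    simp only [rsum, RegularExpression.matches'_add, Language.mem_add, ih, List.mem_cons]
    constructor
    · rintro (h | ⟨r', h1, h2⟩); exacts [⟨r, Or.inl rfl, h⟩, ⟨r', Or.inr h1, h2⟩]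
    · rintro ⟨r', (rfl | h1), h2⟩; exacts [Or.inl h2, Or.inr ⟨r', h1, h2⟩]

variable [Fintype α] [Fintype σ] [DecidableEq σ]

/-- Regexp for paths with no intermediate states. -/
noncomputable def base (M : DFA α σ) (p q : σ) : RegularExpression α :=
  (if p = q then 1 else 0) +
    rsum ((Finset.univ.filter (fun c : α => M.step p c = q)).toList.map RegularExpression.char)

theorem base_matches (M : DFA α σ) (p q : σ) :
    (base M p q).matches' = Paths M p q ∅ := by
  ext w
  have hmem : w ∈ (base M p q).matches' ↔
      (p = q ∧ w = []) ∨ ∃ c, M.step p c = q ∧ w = [c] := by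
    simp only [base, RegularExpression.matches'_add, Language.mem_add, mem_rsum,
      List.mem_map, Finset.mem_toList, Finset.mem_filter, Finset.mem_univ, true_and]
    constructor
    · rintro (h | ⟨r, ⟨c, hc, rfl⟩, h2⟩)
      · by_cases hpq : p = q
        · simp only [hpq, if_true] at h
          exact Or.inl ⟨hpq, (Language.mem_one _).1 h⟩
        · simp only [hpq, if_false] at h
          exact absurd h (by simp)
      · exact Or.inr ⟨c, hc, by simp at h2; exact h2⟩
    · rintro (⟨rfl, rfl⟩ | ⟨c, hc, rfl⟩)
      · exact Or.inl (by simp [Language.mem_one])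
      · exact Or.inr ⟨RegularExpression.char c, ⟨c, hc, rfl⟩, by simp; rfl⟩
  rw [hmem]
  constructor
  · rintro (⟨rfl, rfl⟩ | ⟨c, hc, rfl⟩)
    · exact ⟨rfl, fun u h1 h2 h3 => absurd (List.prefix_nil.1 h3) h1⟩
    · refine ⟨by simpa [DFA.evalFrom] using hc, fun u h1 h2 h3 => absurd ?_ h2⟩
      have hle := h3.length_le
      have h0 : 0 < u.length := List.length_pos_iff.2 h1
      exact h3.eq_of_length (by simp at hle ⊢; omega)
  · rintro ⟨heval, hpre⟩
    match w with
    | [] => exact Or.inl ⟨by simpa [DFA.evalFrom] using heval, rfl⟩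
    | [c] => exact Or.inr ⟨c, by simpa [DFA.evalFrom] using heval, rfl⟩
    | c :: d :: t =>
      exact absurd (hpre [c] (by simp) (by simp) ⟨d :: t, rfl⟩) (Set.notMem_empty _)

/-- McNaughton–Yamada regexp. -/
noncomputable def A (M : DFA α σ) : List σ → σ → σ → RegularExpression α
  | [], p, q => base M p q
  | s :: l, p, q => A M l p q + A M l p s * RegularExpression.star (A M l s s) * A M l s q

theorem A_matches (M : DFA α σ) (l : List σ) (p q : σ) :
    (A M l p q).matches' = Paths M p q {x | x ∈ l} := by
  induction l generalizing p q with
  | nil =>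
    have : {x : σ | x ∈ ([] : List σ)} = ∅ := by simp
    rw [this]; exact base_matches M p q
  | cons s l ih =>
    have hset : {x : σ | x ∈ s :: l} = insert s {x : σ | x ∈ l} := by
      ext x; simp [List.mem_cons]
    simp only [A, RegularExpression.matches'_add, RegularExpression.matches'_mul,
      RegularExpression.matches'_star, ih, hset, paths_insert]

/-- Kleene's theorem: every DFA-recognizable language is given by a regular expression. -/
theorem kleene (M : DFA α σ) [DecidablePred (· ∈ M.accept)] :
    ∃ r : RegularExpression α, r.matches' = M.accepts := by
  refine ⟨rsum ((Finset.univ.filter (· ∈ M.accept)).toList.map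
    (fun q => A M Finset.univ.toList M.start q)), ?_⟩
  ext w
  rw [mem_rsum, DFA.mem_accepts]
  constructor
  · rintro ⟨r, hr, hw⟩
    simp only [List.mem_map, Finset.mem_toList, Finset.mem_filter, Finset.mem_univ,
      true_and] at hr
    obtain ⟨q, hq, rfl⟩ := hr
    rw [A_matches] at hw
    rw [show M.eval w = q from hw.1]
    exact hq
  · intro h
    refine ⟨A M Finset.univ.toList M.start (M.eval w), ?_, ?_⟩
    · simp only [List.mem_map, Finset.mem_toList, Finset.mem_filter, Finset.mem_univ, true_and]
      exact ⟨M.eval w, h, rfl⟩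
    · rw [A_matches]
      exact ⟨rfl, fun u _ _ _ => by simp⟩

end KlAux

namespace KlAux

variable {α : Type}

/-- `(a∗ b∗)∗ = (a + b)∗` in a Kleene algebra. -/
theorem kstar_mul_kstar_kstar {K : Type u} [KleeneAlgebra K] (a b : K) :
    (a∗ * b∗)∗ = (a + b)∗ := by
  apply le_antisymm
  · have h1 : a∗ * b∗ ≤ (a + b)∗ * (a + b)∗ :=
      mul_le_mul' (kstar_mono le_self_add) (kstar_mono le_add_self)
    rw [kstar_mul_kstar] at h1
    calc (a∗ * b∗)∗ ≤ ((a + b)∗)∗ := kstar_mono h1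
      _ = (a + b)∗ := kstar_idem _
  · apply kstar_mono
    have ha : a ≤ a∗ * b∗ := by
      calc a = a * 1 := (mul_one a).symm
        _ ≤ a∗ * b∗ := mul_le_mul' le_kstar one_le_kstar
    have hb : b ≤ a∗ * b∗ := by
      calc b = 1 * b := (one_mul b).symm
        _ ≤ a∗ * b∗ := mul_le_mul' one_le_kstar le_kstar
    exact add_le ha hb

/-- Union-free star of a sum. -/
def phi : List (RegularExpression α) → RegularExpression α
  | [] => RegularExpression.star 0
  | r :: l => RegularExpression.star (RegularExpression.comp (RegularExpression.star r) (phi l))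

/-- Sum of matched languages. -/
def lsum (l : List (RegularExpression α)) : Language α :=
  (l.map RegularExpression.matches').sum

theorem lsum_nil : lsum ([] : List (RegularExpression α)) = 0 := rfl

theorem lsum_cons (r : RegularExpression α) (l) :
    lsum (r :: l) = r.matches' + lsum l := by simp [lsum]

theorem lsum_append (l m : List (RegularExpression α)) :
    lsum (l ++ m) = lsum l + lsum m := by simp [lsum]

theorem phi_unionFree : ∀ l : List (RegularExpression α),
    (∀ r ∈ l, RegularExpression.UnionFree r) → RegularExpression.UnionFree (phi l)
  | [], _ => trivial
  | r :: l, h => ⟨h r (by simp), phi_unionFree l fun r hr => h r (by simp [hr])⟩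

theorem phi_matches : ∀ l : List (RegularExpression α),
    (phi l).matches' = (lsum l)∗
  | [] => by simp [phi, lsum_nil]
  | r :: l => by
    show ((RegularExpression.star r).matches' * (phi l).matches')∗ = _
    rw [RegularExpression.matches'_star, phi_matches l, kstar_mul_kstar_kstar, lsum_cons]

/-- Union-free normal form: a list of union-free regexps whose sum is equivalent. -/
def nf : RegularExpression α → List (RegularExpression α)
  | RegularExpression.zero => []
  | RegularExpression.epsilon => [RegularExpression.star 0]
  | RegularExpression.char c => [RegularExpression.char c]
  | RegularExpression.plus r s => nf r ++ nf s
  | RegularExpression.comp r s => (nf r).flatMap fun a => (nf s).map (RegularExpression.comp a)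
  | RegularExpression.star r => [phi (nf r)]

theorem nf_unionFree : ∀ r : RegularExpression α, ∀ u ∈ nf r, RegularExpression.UnionFree u
  | RegularExpression.zero => by simp [nf]
  | RegularExpression.epsilon => by simp [nf]; trivial
  | RegularExpression.char c => by simp [nf]; trivial
  | RegularExpression.plus r s => by
    intro u hu
    rcases List.mem_append.1 hu with h | h
    exacts [nf_unionFree r u h, nf_unionFree s u h]
  | RegularExpression.comp r s => by
    intro u hu
    simp only [nf, List.mem_flatMap, List.mem_map] at hu
    obtain ⟨a, ha, b, hb, rfl⟩ := hu
    exact ⟨nf_unionFree r a ha, nf_unionFree s b hb⟩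
  | RegularExpression.star r => by
    intro u hu
    simp only [nf, List.mem_singleton] at hu
    subst hu
    exact phi_unionFree _ (nf_unionFree r)

theorem lsum_map_comp (a : RegularExpression α) (m : List (RegularExpression α)) :
    lsum (m.map (RegularExpression.comp a)) = a.matches' * lsum m := by
  induction m with
  | nil => simp [lsum_nil, lsum]
  | cons b m ih =>
    simp only [List.map_cons, lsum_cons, ih]
    show (a * b).matches' + _ = _
    rw [RegularExpression.matches'_mul, mul_add]

theorem lsum_nf : ∀ r : RegularExpression α, lsum (nf r) = r.matches'
  | RegularExpression.zero => rfl
  | RegularExpression.epsilon => by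
    show lsum [RegularExpression.star 0] = _
    rw [lsum_cons, lsum_nil, RegularExpression.matches'_star, RegularExpression.matches'_zero,
      add_zero, kstar_zero]
    rfl
  | RegularExpression.char c => by simp [nf, lsum_cons, lsum_nil]
  | RegularExpression.plus r s => by
    show lsum (nf r ++ nf s) = _
    rw [lsum_append, lsum_nf r, lsum_nf s]; rfl
  | RegularExpression.comp r s => by
    show lsum ((nf r).flatMap fun a => (nf s).map (RegularExpression.comp a)) = (r * s).matches'
    rw [RegularExpression.matches'_mul, ← lsum_nf r, ← lsum_nf s]
    induction nf r with
    | nil => simp [lsum_nil, lsum]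
    | cons a l ih =>
      rw [List.flatMap_cons, lsum_append, lsum_map_comp, ih, lsum_cons, add_mul]
  | RegularExpression.star r => by
    show lsum [phi (nf r)] = r.matches'∗
    rw [lsum_cons, lsum_nil, add_zero, phi_matches, lsum_nf r]

end KlAux

/-- `MON ⊂ STAR ⊂ UF`: proper inclusions of monoidal in star in union-free languages. -/
theorem mon_ssubset_star_ssubset_unionFree [Fintype α] (a : α) :
    (∀ L : Language α, IsMonoidal L → IsStarLang L) ∧
    (∀ L : Language α, IsStarLang L → IsUnionFree L) ∧
    (∃ L : Language α, IsStarLang L ∧ ¬ IsMonoidal L) ∧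
    (∃ L : Language α, IsUnionFree L ∧ ¬ IsStarLang L) := by
  refine ⟨?_, ?_, ?_, ?_⟩
  · intro L hL
    refine ⟨⊤, ⟨Unit, inferInstance, ⟨fun _ _ => (), (), Set.univ⟩, ?_⟩, ?_⟩
    · ext w; exact ⟨fun _ => trivial, fun _ => trivial⟩
    · rw [hL]; exact le_antisymm le_kstar le_top
  · intro L hL
    obtain ⟨H, ⟨σ, _, M, hM⟩, rfl⟩ := hL
    classical
    obtain ⟨r, hr⟩ := KlAux.kleene M
    exact ⟨KlAux.phi (KlAux.nf r), KlAux.phi_unionFree _ (KlAux.nf_unionFree r),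
      by rw [KlAux.phi_matches, KlAux.lsum_nf, hr, hM]⟩
  · refine ⟨1, ⟨0, ⟨Unit, inferInstance, ⟨fun _ _ => (), (), ∅⟩, ?_⟩, kstar_zero.symm⟩, ?_⟩
    · ext w
      exact iff_of_false (Set.notMem_empty _) (Set.notMem_empty _)
    · intro h
      have : [a] ∈ (1 : Language α) := h ▸ Set.mem_univ [a]
      simpa [Language.mem_one] using this
  · refine ⟨{[a]}, ⟨RegularExpression.char a, trivial, RegularExpression.matches'_char a⟩, ?_⟩
    rintro ⟨H, -, hH⟩
    have : [] ∈ ({[a]} : Language α) := hH ▸ Language.nil_mem_kstar H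
    have h2 := Set.mem_singleton_iff.1 this
    simp at h2
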